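/- Let L, M, N be positive integers with M ≥ 2, let λ ∈ (0,1) with 1/M ≤ λ, and suppose N ≤ 2^{L·(λ·log₂ M − 1)} with λ·log₂ M > 1. Let F_1,…,F_N be independent random functions from {1,…,L} to {1,…,M}, where each value F_i(l) is chosen independently and uniformly in {1,…,M}. Then with positive probability, for every pair i ≠ j one has |{l : F_i(l) = F_j(l)}| ≤ λ·L. -/

import Mathlib

open MeasureTheory ProbabilityTheory
open scoped ENNReal


lemma pair_bound {Ω : Type*} [MeasurableSpace Ω] (P : Measure Ω) [IsProbabilityMeasure P]
    {L M N : ℕ} (hM : 0 < M) (k : ℕ)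
    (F : Fin N → Ω → (Fin L → Fin M))
    (hindep : iIndepFun
      (fun (p : Fin N × Fin L) ω => F p.1 ω p.2) P)
    (hunif : ∀ (i : Fin N) (l : Fin L) (m : Fin M), P {ω | F i ω l = m} = 1 / (M : ℝ≥0∞))
    (i j : Fin N) (hij : i ≠ j) (r : ℝ)
    (hrk : ∀ n : ℕ, r < (n : ℝ) → k ≤ n) :
    P {ω | r < ((Finset.univ.filter fun l : Fin L => F i ω l = F j ω l).card : ℝ)}
      ≤ (L.choose k : ℝ≥0∞) * ((M : ℝ≥0∞)⁻¹) ^ k := by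
  classical
  set C : Fin L → Set Ω := fun l => {ω | F i ω l = F j ω l} with hC
  -- step A: inclusion into union over subsets of size k
  have hsub : {ω | r < ((Finset.univ.filter fun l : Fin L => F i ω l = F j ω l).card : ℝ)}
      ⊆ ⋃ S ∈ Finset.powersetCard k (Finset.univ : Finset (Fin L)), ⋂ l ∈ S, C l := by
    intro ω hω
    have hk : k ≤ (Finset.univ.filter fun l : Fin L => F i ω l = F j ω l).card :=
      hrk _ hω
    obtain ⟨S, hS, hScard⟩ := Finset.exists_subset_card_eq hk
    refine Set.mem_biUnion (show S ∈ Finset.powersetCard k (Finset.univ : Finset (Fin L)) by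
      simp [Finset.mem_powersetCard, hScard]) ?_
    simp only [Set.mem_iInter]
    intro l hl
    have := hS hl
    simp only [Finset.mem_filter] at this
    exact this.2
  refine (measure_mono hsub).trans ?_
  refine (measure_biUnion_finset_le _ _).trans ?_
  have hper : ∀ S ∈ Finset.powersetCard k (Finset.univ : Finset (Fin L)),
      P (⋂ l ∈ S, C l) ≤ ((M : ℝ≥0∞)⁻¹) ^ k := by
    intro S hS
    have hScard : S.card = k := (Finset.mem_powersetCard.1 hS).2
    set z : Fin M := ⟨0, hM⟩ with hz
    set G : Finset (Fin L → Fin M) :=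
      Fintype.piFinset (fun l => if l ∈ S then (Finset.univ : Finset (Fin M)) else {z}) with hG
    set E : (Fin L → Fin M) → Set Ω :=
      fun g => ⋂ p ∈ (({i, j} : Finset (Fin N)) ×ˢ S), {ω | F p.1 ω p.2 = g p.2} with hE
    -- inclusion
    have hsub2 : (⋂ l ∈ S, C l) ⊆ ⋃ g ∈ G, E g := by
      intro ω hω
      simp only [Set.mem_iInter] at hω
      have hgG : (fun l => if l ∈ S then F i ω l else z) ∈ G := by
        simp only [hG, Fintype.mem_piFinset]
        intro l
        by_cases hl : l ∈ S <;> simp [hl]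
      refine Set.mem_biUnion hgG ?_
      · simp only [hE, Set.mem_iInter]
        rintro ⟨a, l⟩ hp
        simp only [Finset.mem_product, Finset.mem_insert, Finset.mem_singleton] at hp
        obtain ⟨ha, hl⟩ := hp
        have hcol := hω l hl
        simp only [hC, Set.mem_setOf_eq] at hcol
        rcases ha with rfl | rfl <;> simp [hl, hcol]
    refine (measure_mono hsub2).trans ?_
    refine (measure_biUnion_finset_le _ _).trans ?_
    have hEg : ∀ g ∈ G, P (E g) = ((M : ℝ≥0∞)⁻¹) ^ (2 * k) := by
      intro g _
      have := hindep.meas_biInter (S := (({i, j} : Finset (Fin N)) ×ˢ S))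
        (s := fun p => {ω | F p.1 ω p.2 = g p.2}) ?_
      · rw [hE, this]
        have : ∀ p ∈ (({i, j} : Finset (Fin N)) ×ˢ S),
            P {ω | F p.1 ω p.2 = g p.2} = (M : ℝ≥0∞)⁻¹ := by
          intro p _
          rw [hunif p.1 p.2 (g p.2), one_div]
        rw [Finset.prod_congr rfl this, Finset.prod_const, Finset.card_product,
          Finset.card_insert_of_notMem (by simpa using hij), Finset.card_singleton, hScard]
      · intro p _
        exact ⟨{g p.2}, measurableSet_singleton _, by ext ω; simp⟩
    calc ∑ g ∈ G, P (E g) = ∑ g ∈ G, ((M : ℝ≥0∞)⁻¹) ^ (2 * k) :=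
          Finset.sum_congr rfl hEg
      _ = (G.card : ℝ≥0∞) * ((M : ℝ≥0∞)⁻¹) ^ (2 * k) := by
          rw [Finset.sum_const, nsmul_eq_mul]
      _ = ((M : ℝ≥0∞)) ^ k * ((M : ℝ≥0∞)⁻¹) ^ (2 * k) := by
          congr 1
          rw [hG, Fintype.card_piFinset]
          push_cast
          rw [show (fun l => ((if l ∈ S then (Finset.univ : Finset (Fin M)) else {z}).card : ℝ≥0∞))
            = fun l => (if l ∈ S then (M : ℝ≥0∞) else 1) from ?_]
          · rw [Finset.prod_ite_mem, Finset.univ_inter, Finset.prod_const, hScard]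
          · funext l
            by_cases hl : l ∈ S <;> simp [hl]
      _ = ((M : ℝ≥0∞)⁻¹) ^ k := by
          rw [two_mul, pow_add, ← mul_assoc, ← mul_pow,
            ENNReal.mul_inv_cancel (by exact_mod_cast hM.ne') (by simp), one_pow, one_mul]
      _ ≤ ((M : ℝ≥0∞)⁻¹) ^ k := le_rfl
  calc ∑ S ∈ Finset.powersetCard k (Finset.univ : Finset (Fin L)), P (⋂ l ∈ S, C l)
      ≤ ∑ S ∈ Finset.powersetCard k (Finset.univ : Finset (Fin L)), ((M : ℝ≥0∞)⁻¹) ^ k :=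
        Finset.sum_le_sum hper
    _ = (L.choose k : ℝ≥0∞) * ((M : ℝ≥0∞)⁻¹) ^ k := by
        rw [Finset.sum_const, nsmul_eq_mul, Finset.card_powersetCard, Finset.card_univ,
          Fintype.card_fin]

lemma choose_le_two_pow' (L k : ℕ) : L.choose k ≤ 2 ^ L := by
  rcases le_or_gt k L with h | h
  · calc L.choose k ≤ ∑ i ∈ Finset.range (L + 1), L.choose i :=
        Finset.single_le_sum (fun _ _ => Nat.zero_le _) (Finset.mem_range.2 (Nat.lt_succ_of_le h))
      _ = 2 ^ L := Nat.sum_range_choose L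
  · simp [Nat.choose_eq_zero_of_lt h]

lemma real_bound (L M N k : ℕ) (hM : 2 ≤ M) (hN : 1 ≤ N) (lam : ℝ)
    (hklam : lam * L ≤ k)
    (hNunion : (N : ℝ) * ((N : ℝ) - 1) * 2 ^ (-(L : ℝ) * (lam * Real.logb 2 M - 1)) < 1) :
    ((N * (N - 1) : ℕ) : ℝ) * (L.choose k) * ((M : ℝ)⁻¹) ^ k < 1 := by
  have hM1 : (1 : ℝ) < M := by exact_mod_cast hM.trans_lt' one_lt_two
  have hMpos : (0 : ℝ) < M := lt_trans one_pos hM1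
  have hcast : ((N * (N - 1) : ℕ) : ℝ) = (N : ℝ) * ((N : ℝ) - 1) := by
    push_cast [Nat.cast_sub hN]
    ring
  have ha : (0 : ℝ) ≤ (N : ℝ) * ((N : ℝ) - 1) := by
    have : (1 : ℝ) ≤ (N : ℝ) := by exact_mod_cast hN
    nlinarith
  have hchoose : ((L.choose k : ℕ) : ℝ) ≤ (2 : ℝ) ^ ((L : ℕ) : ℝ) := by
    rw [Real.rpow_natCast]
    exact_mod_cast choose_le_two_pow' L k
  have hMk : ((M : ℝ)⁻¹) ^ k = (M : ℝ) ^ (-(k : ℝ)) := by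
    rw [Real.rpow_neg hMpos.le, Real.rpow_natCast, inv_pow]
  have hexp : (M : ℝ) ^ (-(k : ℝ)) ≤ (M : ℝ) ^ (-(lam * L)) :=
    Real.rpow_le_rpow_of_exponent_le hM1.le (neg_le_neg hklam)
  have hM2 : (M : ℝ) = (2 : ℝ) ^ (Real.logb 2 M) :=
    (Real.rpow_logb two_pos (by norm_num) hMpos).symm
  have hM3 : (M : ℝ) ^ (-(lam * L)) = (2 : ℝ) ^ (Real.logb 2 M * (-(lam * L))) := by
    rw [Real.rpow_mul (by norm_num : (0:ℝ) ≤ 2), ← hM2]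
  have hkey : ((L.choose k : ℕ) : ℝ) * ((M : ℝ)⁻¹) ^ k
      ≤ (2 : ℝ) ^ (-(L : ℝ) * (lam * Real.logb 2 M - 1)) := by
    have h1 : ((L.choose k : ℕ) : ℝ) * ((M : ℝ)⁻¹) ^ k
        ≤ (2 : ℝ) ^ ((L : ℕ) : ℝ) * (2 : ℝ) ^ (Real.logb 2 M * (-(lam * L))) := by
      rw [hMk]
      exact mul_le_mul hchoose (hM3 ▸ hexp) (Real.rpow_nonneg hMpos.le _)
        (Real.rpow_nonneg (by norm_num) _)
    rw [← Real.rpow_add two_pos] at h1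
    convert h1 using 2
    ring
  calc ((N * (N - 1) : ℕ) : ℝ) * (L.choose k) * ((M : ℝ)⁻¹) ^ k
      = (N : ℝ) * ((N : ℝ) - 1) * (((L.choose k : ℕ) : ℝ) * ((M : ℝ)⁻¹) ^ k) := by
        rw [hcast]; ring
    _ ≤ (N : ℝ) * ((N : ℝ) - 1) * (2 : ℝ) ^ (-(L : ℝ) * (lam * Real.logb 2 M - 1)) :=
        mul_le_mul_of_nonneg_left hkey ha
    _ < 1 := hNunion

/-- Random-coloring existence: if `F_1,…,F_N : {1,…,L} → {1,…,M}` are uniformly random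
independent functions, `1/M ≤ λ`, `λ·log₂ M > 1`, `N ≤ 2^{L(λ log₂ M − 1)}` and
`N(N−1)·2^{-L(λ log₂ M − 1)} < 1`, then with positive probability every pair `i ≠ j`
collides on at most a `λ`-fraction of `{1,…,L}`. -/
theorem stmt6 {Ω : Type*} [MeasurableSpace Ω] (P : Measure Ω) [IsProbabilityMeasure P]
    (L M N : ℕ) (hL : 0 < L) (hM : 2 ≤ M) (hN : 0 < N)
    (lam : ℝ) (hlam0 : 0 < lam) (hlam1 : lam < 1) (hMlam : 1 / (M : ℝ) ≤ lam)
    (hc : 1 < lam * Real.logb 2 M)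
    (hNsize : (N : ℝ) ≤ 2 ^ ((L : ℝ) * (lam * Real.logb 2 M - 1)))
    (hNunion : (N : ℝ) * ((N : ℝ) - 1) * 2 ^ (-(L : ℝ) * (lam * Real.logb 2 M - 1)) < 1)
    (F : Fin N → Ω → (Fin L → Fin M))
    (hmeas : ∀ (i : Fin N) (l : Fin L), Measurable fun ω => F i ω l)
    (hindep : iIndepFun
      (fun (p : Fin N × Fin L) ω => F p.1 ω p.2) P)
    (hunif : ∀ (i : Fin N) (l : Fin L) (m : Fin M), P {ω | F i ω l = m} = 1 / (M : ℝ≥0∞)) :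
    0 < P {ω | ∀ i j : Fin N, i ≠ j →
      ((Finset.univ.filter fun l : Fin L => F i ω l = F j ω l).card : ℝ) ≤ lam * L} := by
  classical
  have hMpos : 0 < M := by omega
  set k : ℕ := ⌊lam * (L : ℝ)⌋₊ + 1 with hk
  have hlamL0 : (0 : ℝ) ≤ lam * L := by positivity
  have hrk : ∀ n : ℕ, lam * L < (n : ℝ) → k ≤ n := fun n hn =>
    Nat.succ_le_of_lt ((Nat.floor_lt hlamL0).2 hn)
  have hklam : lam * L ≤ (k : ℝ) := by
    have h1 := Nat.lt_floor_add_one (lam * (L : ℝ))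
    rw [hk]
    push_cast
    linarith
  set β : ℝ≥0∞ := (L.choose k : ℝ≥0∞) * ((M : ℝ≥0∞)⁻¹) ^ k with hβ
  have hpair : ∀ i j : Fin N, i ≠ j →
      P {ω | lam * L < ((Finset.univ.filter fun l : Fin L => F i ω l = F j ω l).card : ℝ)}
        ≤ β := fun i j hij =>
    pair_bound P hMpos k F hindep hunif i j hij (lam * L) hrk
  set Good := {ω | ∀ i j : Fin N, i ≠ j →
      ((Finset.univ.filter fun l : Fin L => F i ω l = F j ω l).card : ℝ) ≤ lam * L}
    with hGoodDef
  have hΦ : Measurable (fun ω (p : Fin N × Fin L) => F p.1 ω p.2) := by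
    rw [measurable_pi_iff]; exact fun p => hmeas p.1 p.2
  have hGoodMeas : MeasurableSet Good := by
    have hset : Good = (fun ω (p : Fin N × Fin L) => F p.1 ω p.2) ⁻¹'
        {v | ∀ i j : Fin N, i ≠ j →
          ((Finset.univ.filter fun l : Fin L => v (i, l) = v (j, l)).card : ℝ) ≤ lam * L} := rfl
    rw [hset]
    exact hΦ (Set.to_countable _).measurableSet
  set A : Fin N → Fin N → Set Ω := fun i j =>
    {ω | lam * L < ((Finset.univ.filter fun l : Fin L => F i ω l = F j ω l).card : ℝ)} with hA
  have hcompl : Goodᶜ ⊆ ⋃ p : Fin N × Fin N, ⋃ (_ : p.1 ≠ p.2), A p.1 p.2 := by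
    intro ω hω
    simp only [hGoodDef, Set.mem_compl_iff, Set.mem_setOf_eq, not_forall, not_le] at hω
    obtain ⟨i, j, hij, hlt⟩ := hω
    exact Set.mem_iUnion.2 ⟨(i, j), Set.mem_iUnion.2 ⟨hij, hlt⟩⟩
  have hterm : ∀ p : Fin N × Fin N,
      P (⋃ (_ : p.1 ≠ p.2), A p.1 p.2) ≤ if p.1 = p.2 then 0 else β := by
    intro p
    by_cases hp : p.1 = p.2
    · simp [hp]
    · simp only [hp, if_false]
      refine le_trans (measure_mono ?_) (hpair p.1 p.2 hp)
      exact Set.iUnion_subset fun _ => subset_rfl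
  have hbad : P Goodᶜ ≤ ((N * (N - 1) : ℕ) : ℝ≥0∞) * β := by
    refine (measure_mono hcompl).trans ?_
    refine (measure_iUnion_le _).trans ?_
    rw [tsum_fintype]
    refine (Finset.sum_le_sum fun p _ => hterm p).trans ?_
    rw [Fintype.sum_prod_type]
    have hinner : ∀ i : Fin N,
        (∑ j : Fin N, if i = j then (0 : ℝ≥0∞) else β) = ((N - 1 : ℕ) : ℝ≥0∞) * β := by
      intro i
      rw [← Finset.add_sum_erase _ _ (Finset.mem_univ i)]
      rw [Finset.sum_congr rfl (fun j hj => by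
        rw [if_neg (Ne.symm (Finset.ne_of_mem_erase hj))]),
        Finset.sum_const, Finset.card_erase_of_mem (Finset.mem_univ i), Finset.card_univ,
        Fintype.card_fin, nsmul_eq_mul]
      simp
    rw [Finset.sum_congr rfl (fun i _ => hinner i), Finset.sum_const, Finset.card_univ,
      Fintype.card_fin, nsmul_eq_mul, ← mul_assoc, ← Nat.cast_mul]
  have hlt1 : ((N * (N - 1) : ℕ) : ℝ≥0∞) * β < 1 := by
    have hMR : (0 : ℝ) < M := by exact_mod_cast hMpos
    have heq : ((N * (N - 1) : ℕ) : ℝ≥0∞) * β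
        = ENNReal.ofReal (((N * (N - 1) : ℕ) : ℝ) * (L.choose k) * ((M : ℝ)⁻¹) ^ k) := by
      rw [hβ, ENNReal.ofReal_mul (by positivity), ENNReal.ofReal_mul (by positivity),
        ENNReal.ofReal_pow (by positivity), ENNReal.ofReal_inv_of_pos hMR,
        ENNReal.ofReal_natCast, ENNReal.ofReal_natCast, mul_assoc]
      simp
    rw [heq]
    exact ENNReal.ofReal_lt_one.2 (real_bound L M N k hM hN lam hklam hNunion)
  have hPbad : P Goodᶜ < 1 := hbad.trans_lt hlt1
  have hPGood : P Good = 1 - P Goodᶜ := by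
    conv_lhs => rw [← compl_compl Good]
    exact prob_compl_eq_one_sub hGoodMeas.compl
  rw [hPGood]
  exact tsub_pos_iff_lt.2 hPbad
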